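/- Let A be a probabilistic automaton with finite state space Q, let β be a probability distribution on Q, and let w be a lasso shape word. Then the process (δ(β, w[1..n]))_{n∈ℕ} induced by w and β on Q is simple. -/

import Mathlib

open Filter Topology MeasureTheory

namespace PAut

/-- A finite probabilistic table: row-stochastic matrices indexed by letters,
together with an initial distribution. -/
structure FPT (Q : Type*) (A : Type*) [Fintype Q] where
  M : A → Q → Q → ℝ
  M_nonneg : ∀ a q q', 0 ≤ M a q q'
  M_row : ∀ a q, ∑ q', M a q q' = 1
  init : Q → ℝ
  init_nonneg : ∀ q, 0 ≤ init q
  init_sum : ∑ q, init q = 1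

variable {Q A : Type*} [Fintype Q] [DecidableEq Q]

/-- `β` is a probability distribution on `Q`. -/
def IsDist (β : Q → ℝ) : Prop := (∀ q, 0 ≤ β q) ∧ ∑ q, β q = 1

/-- The matrix `M_ρ` of a finite word `ρ`. -/
def Mword (T : FPT Q A) : List A → Q → Q → ℝ
  | [], q, q' => if q = q' then 1 else 0
  | a :: ρ, q, q' => ∑ x, T.M a q x * Mword T ρ x q'

/-- `δ(β,ρ)`: the distribution after reading `ρ` from initial distribution `β`. -/
def delta (T : FPT Q A) (β : Q → ℝ) (ρ : List A) : Q → ℝ :=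
  fun q => ∑ q', β q' * Mword T ρ q' q

/-- Support of a distribution. -/
def supp (β : Q → ℝ) : Set Q := {q | β q ≠ 0}

/-- `H·ρ` : states reachable with positive probability from `H` reading `ρ`. -/
def act (T : FPT Q A) (H : Set Q) (ρ : List A) : Set Q :=
  {q | ∃ q' ∈ H, 0 < Mword T ρ q' q}

/-- One step of the homogeneous chain induced on `S` by the word `ρ`. -/
def stepRel (T : FPT Q A) (S : Set Q) (ρ : List A) (x y : Q) : Prop :=
  x ∈ S ∧ y ∈ S ∧ 0 < Mword T ρ x y

/-- `S·ρ^#` : the recurrent states of the homogeneous chain induced on `S` by `ρ`. -/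
def hashSet (T : FPT Q A) (S : Set Q) (ρ : List A) : Set Q :=
  {s | s ∈ S ∧ ∀ t, Relation.ReflTransGen (stepRel T S ρ) s t →
        Relation.ReflTransGen (stepRel T S ρ) t s}

/-- `(S,ρ)` is a `#`-reduction. -/
def IsHashReduction (T : FPT Q A) (S : Set Q) (ρ : List A) : Prop :=
  act T S ρ = S ∧ hashSet T S ρ ≠ S

/-- The execution tree `(β,ρ)` (finite word) is chain recurrent. -/
def ChainRecFin (T : FPT Q A) (β : Q → ℝ) (ρ : List A) : Prop :=
  ∀ ρ₁ ρ₂ : List A, (ρ₁ ++ ρ₂) <+: ρ →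
    ¬ IsHashReduction T (supp (delta T β ρ₁)) ρ₂

/-- `l` is a prefix of the infinite word `w`. -/
def PrefixOf (l : List A) (w : ℕ → A) : Prop :=
  ∀ (i : ℕ) (h : i < l.length), l.get ⟨i, h⟩ = w i

/-- The execution tree `(β,w)` (infinite word) is chain recurrent. -/
def ChainRecInf (T : FPT Q A) (β : Q → ℝ) (w : ℕ → A) : Prop :=
  ∀ ρ₁ ρ₂ : List A, PrefixOf (ρ₁ ++ ρ₂) w →
    ¬ IsHashReduction T (supp (delta T β ρ₁)) ρ₂

/-- `w[1..n]` : the prefix of length `n` of the infinite word `w`. -/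
def wordPrefix (w : ℕ → A) (n : ℕ) : List A := (List.range n).map w

/-- `w[n₁+1..n₂]` : the letters of `w` read between time `n₁` and time `n₂`. -/
def wordSegment (w : ℕ → A) (n₁ n₂ : ℕ) : List A :=
  (List.range (n₂ - n₁)).map fun j => w (n₁ + j)

/-- `μ_n^w = δ(α, w[1..n])` : the induced process on `Q`. -/
def muDist (T : FPT Q A) (w : ℕ → A) (n : ℕ) : Q → ℝ :=
  delta T T.init (wordPrefix w n)

/-- A process `μ` on `Q` is simple: a partition `(Aₙ, Aₙᶜ)` of `Q`,
with mass `> λ` on each point of `Aₙ` and total mass of `Aₙᶜ` going to `0`. -/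
def SimpleProcess (μ : ℕ → Q → ℝ) : Prop :=
  ∃ lam : ℝ, 0 < lam ∧ ∃ Aset : ℕ → Finset Q,
    (∀ n, ∀ q ∈ Aset n, lam < μ n q) ∧
    Tendsto (fun n => ∑ q ∈ (Aset n)ᶜ, μ n q) atTop (𝓝 0)

open Classical in
/-- `β(F)` : the mass a distribution gives to a set of states. -/
noncomputable def massOn (β : Q → ℝ) (F : Set Q) : ℝ :=
  ∑ q : Q, if q ∈ F then β q else 0

open Classical in
/-- The uniform distribution on a set of states. -/
noncomputable def unif (D : Set Q) : Q → ℝ :=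
  fun q => if q ∈ D then 1 / (Nat.card D : ℝ) else 0

/-- The Dirac distribution at a state. -/
def dirac (q : Q) : Q → ℝ := fun q' => if q' = q then 1 else 0

/-- `ε(A)` : the smallest nonzero transition probability of the automaton. -/
noncomputable def minProb (T : FPT Q A) : ℝ :=
  sInf {x : ℝ | 0 < x ∧ ∃ a q q', T.M a q q' = x}

/-! ### Linked graphs -/

/-- Left endpoints of a bipartite graph. -/
def lgA (G : Set (Q × Q)) : Set Q := Prod.fst '' G

/-- Right endpoints of a bipartite graph. -/
def lgB (G : Set (Q × Q)) : Set Q := Prod.snd '' G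

/-- The linking condition for a sequence of bipartite graphs. -/
def IsLinked (l : List (Set (Q × Q))) : Prop :=
  List.Chain' (fun G H => lgB G = lgA H) l

/-- Origin of a linked graph. -/
def lgOrg : List (Set (Q × Q)) → Set Q
  | [] => ∅
  | G :: _ => lgA G

/-- Destination of a linked graph. -/
def lgDest : List (Set (Q × Q)) → Set Q
  | [] => ∅
  | [G] => lgB G
  | _ :: G :: l => lgDest (G :: l)

/-- Destination, with a default value for the empty linked graph. -/
def lgDestD (S : Set Q) : List (Set (Q × Q)) → Set Q
  | [] => S
  | l => lgDest l

/-- Compaction of a linked graph, as a relation on `Q`. -/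
def compRel : List (Set (Q × Q)) → Set (Q × Q)
  | [] => {p | p.1 = p.2}
  | [G] => G
  | G :: H :: l => {p | ∃ t, (p.1, t) ∈ G ∧ (t, p.2) ∈ compRel (H :: l)}

/-- Reachability in a graph given as a set of edges. -/
def grReach (C : Set (Q × Q)) (s t : Q) : Prop :=
  Relation.ReflTransGen (fun a b => (a, b) ∈ C) s t

/-- `Rec(I)` : the recurrent states of the compaction of a linked graph. -/
def recSet (l : List (Set (Q × Q))) : Set Q :=
  {s | s ∈ lgOrg l ∧ ∀ t, grReach (compRel l) s t → grReach (compRel l) t s}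

/-- `Rec(s,I)` : the recurrent states reachable from `s` in the compaction. -/
def recFrom (s : Q) (l : List (Set (Q × Q))) : Set Q :=
  {t | t ∈ recSet l ∧ grReach (compRel l) s t}

/-- Restrict each graph of a linked graph to the sources reachable from `S`. -/
def restrictFrom (S : Set Q) : List (Set (Q × Q)) → List (Set (Q × Q))
  | [] => []
  | G :: l => ({p | p ∈ G ∧ p.1 ∈ S} : Set (Q × Q)) ::
      restrictFrom (lgB ({p | p ∈ G ∧ p.1 ∈ S} : Set (Q × Q))) l

/-- `(i₁,i₂)` (0-indexed) is a border of the linked graph `l`. -/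
def IsBorder (l : List (Set (Q × Q))) (i₁ i₂ : ℕ) : Prop :=
  i₁ < i₂ ∧ i₂ < l.length ∧ lgB (l.getD i₂ ∅) ⊆ lgA (l.getD i₁ ∅)

/-- The action of a border `(i₁,i₂)` (0-indexed) on a linked graph. -/
def borderAct (l : List (Set (Q × Q))) (i₁ i₂ : ℕ) : List (Set (Q × Q)) :=
  let p := i₁ - 1
  let seg := (l.drop i₁).take (i₂ + 1 - i₁)
  let pre := l.take p
  let S := lgDestD (lgOrg l) pre
  let Gspec : Set (Q × Q) := {pr | pr.1 ∈ S ∧ pr.2 ∈ recFrom pr.1 seg}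
  pre ++ Gspec :: restrictFrom (lgB Gspec) (l.drop (p + 1))

/-- Action of a chain of borders on a linked graph. -/
def borderChainAct : List (ℕ × ℕ) → List (Set (Q × Q)) → List (Set (Q × Q))
  | [], l => l
  | b :: bs, l => borderChainAct bs (borderAct l b.1 b.2)

/-- `B` is a chain of borders on the linked graph `l`. -/
def IsBorderChain : List (ℕ × ℕ) → List (Set (Q × Q)) → Prop
  | [], _ => True
  | b :: bs, l => IsBorder l b.1 b.2 ∧ IsBorderChain bs (borderAct l b.1 b.2)

/-- `LG(ρ, S, T)` : the linked graph induced by reading `ρ` from `S`. -/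
def lgOf (T : FPT Q A) (S : Set Q) : List A → List (Set (Q × Q))
  | [] => []
  | a :: ρ => ({p | p.1 ∈ S ∧ 0 < T.M a p.1 p.2} : Set (Q × Q)) ::
      lgOf T (lgB ({p | p.1 ∈ S ∧ 0 < T.M a p.1 p.2} : Set (Q × Q))) ρ

/-- `C →^{#-ρ} D`. -/
def HashRho (T : FPT Q A) (ρ : List A) (C D : Set Q) : Prop :=
  ∃ B : List (ℕ × ℕ), IsBorderChain B (lgOf T C ρ) ∧
    lgDestD C (borderChainAct B (lgOf T C ρ)) = D

/-- `C →^{#} D`. -/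
def Hash (T : FPT Q A) (C D : Set Q) : Prop := ∃ ρ : List A, HashRho T ρ C D

/-- Structurally simple probabilistic automaton. -/
def StructSimple (T : FPT Q A) : Prop :=
  ∀ (ρ : List A) (C D : Set Q),
    D ⊆ C → HashRho T ρ C D →
    (∀ D' : Set Q, HashRho T ρ C D' → D' ⊆ D → D' = D) →
    ChainRecFin T (unif D) ρ

/-- `C →^{#-ρ-I} D`. -/
def HashIRho (T : FPT Q A) (ρ : List A) (C : Set Q) (I : Set (Q × Q)) (D : Set Q) : Prop :=
  ∃ B : List (ℕ × ℕ), IsBorderChain B (lgOf T C ρ) ∧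
    ∃ i : ℕ, 1 ≤ i ∧ i ≤ ρ.length ∧
      compRel ((borderChainAct B (lgOf T C ρ)).take i) = I ∧
      lgDest ((borderChainAct B (lgOf T C ρ)).take i) = D

/-- Edge of the extended support graph. -/
def ESGEdge (T : FPT Q A) (C D : Set Q) : Prop :=
  ∃ (I : Set (Q × Q)) (ρ : List A), HashIRho T ρ C I D

/-- Reachability in the extended support graph. -/
def ESGReach (T : FPT Q A) : Set Q → Set Q → Prop :=
  Relation.ReflTransGen (ESGEdge T)

/-- A subsequence of recurrent execution trees of the execution tree `(β, w)`. -/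
structure RecSeqOf (T : FPT Q A) (β : Q → ℝ) (w : ℕ → A) where
  k : ℕ
  βs : Fin (k + 1) → Q → ℝ
  ρs : Fin k → List A
  ρ's : Fin k → List A
  wlast : ℕ → A
  dists : ∀ i, IsDist (βs i)
  first_eq : βs 0 = β
  supp_sub : ∀ i : Fin k,
    supp (βs i.succ) ⊆ supp (delta T (βs i.castSucc) (ρs i ++ ρ's i))
  chainrec : ∀ i : Fin k, ChainRecFin T (βs i.castSucc) (ρs i)
  chainrec_last : ChainRecInf T (βs (Fin.last k)) wlast
  decomp_prefix : PrefixOf ((List.ofFn fun i : Fin k => ρs i ++ ρ's i).flatten) w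
  decomp_tail : ∀ n : ℕ,
    w (((List.ofFn fun i : Fin k => ρs i ++ ρ's i).flatten).length + n) = wlast n

/-- The length of a sequence of recurrent execution trees. -/
def RecSeqOf.len {T : FPT Q A} {β : Q → ℝ} {w : ℕ → A} (r : RecSeqOf T β w) : ℕ :=
  ∑ i, (r.ρ's i).length

/-- `w` is a lasso shape word `ρ₁ · ρ₂^ω` with `ρ₂` nonempty. -/
def IsLasso (w : ℕ → A) : Prop :=
  ∃ ρ₁ ρ₂ : List A, ρ₂ ≠ [] ∧
    (∀ n : ℕ, n < ρ₁.length → ρ₁[n]? = some (w n)) ∧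
    (∀ n : ℕ, ρ₁.length ≤ n → ρ₂[(n - ρ₁.length) % ρ₂.length]? = some (w n))

/-- The periodic word `ρ^ω`. -/
def periodicWord (ρ : List A) (h : ρ ≠ []) : ℕ → A :=
  fun n => ρ.get ⟨n % ρ.length, Nat.mod_lt n (List.length_pos_iff.mpr h)⟩

/-- States visited infinitely often by a run. -/
def infOcc (r : ℕ → Q) : Set Q := {q | ∀ N : ℕ, ∃ n, N ≤ n ∧ r n = q}

/-- The parity acceptance condition for a priority function `p`. -/
def parityEvent (p : Q → ℕ) : Set (ℕ → Q) := {r | Even (sInf (p '' infOcc r))}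

/-! ### The induced measure on runs -/

/-- Probability of a cylinder of length `n+1` for the chain started in `β` reading `w`. -/
def cylProb (T : FPT Q A) (β : Q → ℝ) (w : ℕ → A) (n : ℕ) (f : Fin (n + 1) → Q) : ℝ :=
  β (f 0) * ∏ i : Fin n, T.M (w i) (f i.castSucc) (f i.succ)

/-- `μ` is the probability measure `P^w` induced on runs by the chain started
in `β` reading `w`. -/
def IsMarkovMeasure [MeasurableSpace Q] (T : FPT Q A) (β : Q → ℝ) (w : ℕ → A)
    (μ : Measure (ℕ → Q)) : Prop :=
  IsProbabilityMeasure μ ∧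
    ∀ (n : ℕ) (f : Fin (n + 1) → Q),
      μ {r | ∀ i : Fin (n + 1), r i = f i} = ENNReal.ofReal (cylProb T β w n f)

/-- `F_n` : the σ-field generated by the coordinates `X_m`, `m ≥ n`. -/
def futureField (Q : Type*) [m : MeasurableSpace Q] (n : ℕ) : MeasurableSpace (ℕ → Q) :=
  ⨆ k, ⨆ _ : n ≤ k, MeasurableSpace.comap (fun r : ℕ → Q => r k) m

/-- `F_∞` : the tail σ-field. -/
def tailField (Q : Type*) [MeasurableSpace Q] : MeasurableSpace (ℕ → Q) :=
  ⨅ n : ℕ, futureField Q n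

/-- `Γ` is an atomic event of the σ-field `m` for the measure `μ`. -/
def IsAtomIn {Q : Type*} [MeasurableSpace Q] (μ : Measure (ℕ → Q))
    (m : MeasurableSpace (ℕ → Q)) (Γ : Set (ℕ → Q)) : Prop :=
  0 < μ Γ ∧ ∀ Γ' : Set (ℕ → Q), MeasurableSet[m] Γ' → Γ' ⊆ Γ → μ Γ' = 0 ∨ μ Γ' = μ Γ

/-- `τ^i_∞` : runs that eventually stay in the jet `J^i`. -/
def tauInf {Q : Type*} {c : ℕ} (J : Fin (c + 1) → ℕ → Set Q) (i : Fin (c + 1)) :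
    Set (ℕ → Q) :=
  {r | ∃ N : ℕ, ∀ n, N ≤ n → r n ∈ J i n}

/-- `(J^0,...,J^c)` is a partition of `Q^ω` into jets. -/
def JetPartition {Q : Type*} {c : ℕ} (J : Fin (c + 1) → ℕ → Set Q) : Prop :=
  ∀ (n : ℕ) (q : Q), ∃! i : Fin (c + 1), q ∈ J i n

/-- Absorption: almost every run eventually enters one of the jets `J^i`, `i ≥ 1`,
and stays there forever. -/
def Absorbing {Q : Type*} [MeasurableSpace Q] {c : ℕ} (μ : Measure (ℕ → Q))
    (J : Fin (c + 1) → ℕ → Set Q) : Prop :=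
  μ {r | ∃ i : Fin (c + 1), i ≠ 0 ∧ ∃ N : ℕ, ∀ n, N ≤ n → r n ∈ J i n} = 1

/-- Conditional probability `μ(E | F)`. -/
noncomputable def condProb {Q : Type*} [MeasurableSpace Q] (μ : Measure (ℕ → Q))
    (E F : Set (ℕ → Q)) : ℝ :=
  (μ (E ∩ F)).toReal / (μ F).toReal

/-- The jet `J` is mixing for the measure `μ`. -/
def MixingJet {Q : Type*} [MeasurableSpace Q] (μ : Measure (ℕ → Q)) (J : ℕ → Set Q) :
    Prop :=
  ∀ q q' : Q, ∀ qs : ℕ → Q, (∀ n, qs n ∈ J n) → ∀ m : ℕ,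
    (∃ L : ℝ, 0 < L ∧
      Tendsto (fun n => condProb μ {r | r n = qs n} {r | r m = q}) atTop (𝓝 L)) →
    (∃ L : ℝ, 0 < L ∧
      Tendsto (fun n => condProb μ {r | r n = qs n} {r | r m = q'}) atTop (𝓝 L)) →
    Tendsto (fun n =>
        condProb μ {r | r n = qs n} ({r | r n ∈ J n} ∩ {r | r m = q}) /
        condProb μ {r | r n = qs n} ({r | r n ∈ J n} ∩ {r | r m = q'}))
      atTop (𝓝 1)

end PAut

namespace PAut
section Aux
variable {Q A : Type*} [Fintype Q] [DecidableEq Q]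

theorem Mword_nonneg (T : FPT Q A) (ρ : List A) (q q' : Q) : 0 ≤ Mword T ρ q q' := by
  induction ρ generalizing q with
  | nil => unfold Mword; positivity
  | cons a ρ ih =>
    unfold Mword
    exact Finset.sum_nonneg fun x _ => mul_nonneg (T.M_nonneg a q x) (ih x)

theorem Mword_row (T : FPT Q A) (ρ : List A) (q : Q) : ∑ q', Mword T ρ q q' = 1 := by
  induction ρ generalizing q with
  | nil =>
    unfold Mword
    simp
  | cons a ρ ih =>
    unfold Mword
    rw [Finset.sum_comm]
    calc ∑ x, ∑ q', T.M a q x * Mword T ρ x q'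
        = ∑ x, T.M a q x * ∑ q', Mword T ρ x q' := by
          simp [Finset.mul_sum]
      _ = ∑ x, T.M a q x := by simp [ih]
      _ = 1 := T.M_row a q

theorem Mword_append (T : FPT Q A) (ρ σ : List A) (q q' : Q) :
    Mword T (ρ ++ σ) q q' = ∑ x, Mword T ρ q x * Mword T σ x q' := by
  induction ρ generalizing q with
  | nil =>
    simp only [List.nil_append]
    have h : ∀ x, Mword T [] q x = if q = x then 1 else 0 := fun x => rfl
    simp [h]
  | cons a ρ ih =>
    show Mword T (a :: (ρ ++ σ)) q q' = _
    rw [show Mword T (a :: (ρ ++ σ)) q q' = ∑ x, T.M a q x * Mword T (ρ ++ σ) x q' from rfl]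
    calc ∑ x, T.M a q x * Mword T (ρ ++ σ) x q'
        = ∑ x, ∑ y, T.M a q x * (Mword T ρ x y * Mword T σ y q') := by
          simp [ih, Finset.mul_sum]
      _ = ∑ y, ∑ x, T.M a q x * (Mword T ρ x y * Mword T σ y q') := Finset.sum_comm
      _ = ∑ y, (∑ x, T.M a q x * Mword T ρ x y) * Mword T σ y q' := by
          simp [Finset.sum_mul, mul_assoc]
      _ = _ := rfl

theorem delta_nil (T : FPT Q A) (β : Q → ℝ) : delta T β [] = β := by
  funext q
  unfold delta
  have h : ∀ x, Mword T [] x q = if x = q then 1 else 0 := fun x => rfl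
  simp [h]

theorem delta_append (T : FPT Q A) (β : Q → ℝ) (ρ σ : List A) :
    delta T β (ρ ++ σ) = delta T (delta T β ρ) σ := by
  funext q
  unfold delta
  calc ∑ x, β x * Mword T (ρ ++ σ) x q
      = ∑ x, ∑ y, β x * (Mword T ρ x y * Mword T σ y q) := by
        simp [Mword_append, Finset.mul_sum]
    _ = ∑ y, ∑ x, β x * (Mword T ρ x y * Mword T σ y q) := Finset.sum_comm
    _ = _ := by simp [Finset.sum_mul, mul_assoc]

theorem delta_nonneg (T : FPT Q A) {β : Q → ℝ} (hβ : ∀ q, 0 ≤ β q) (ρ : List A) (q : Q) :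
    0 ≤ delta T β ρ q :=
  Finset.sum_nonneg fun x _ => mul_nonneg (hβ x) (Mword_nonneg T ρ x q)

/-- One step of the chain with transition matrix `C`, acting on distributions. -/
def appC (C : Q → Q → ℝ) (u : Q → ℝ) : Q → ℝ := fun q => ∑ x, u x * C x q

set_option maxHeartbeats 1000000 in
theorem key_conv (C : Q → Q → ℝ) (hnn : ∀ q q', 0 ≤ C q q')
    (hrow : ∀ q, ∑ q', C q q' = 1)
    (htrans : ∀ q x q', 0 < C q x → 0 < C x q' → 0 < C q q')
    (v : Q → ℝ) (hv : ∀ q, 0 ≤ v q) (q0 : Q) :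
    ∃ L : ℝ, Tendsto (fun k => (appC C)^[k] v q0) atTop (𝓝 L) := by
  classical
  set u : ℕ → Q → ℝ := fun k => (appC C)^[k] v with hu
  have husucc : ∀ k, u (k + 1) = appC C (u k) := fun k => Function.iterate_succ_apply' _ _ _
  have hunn : ∀ k q, 0 ≤ u k q := by
    intro k
    induction k with
    | zero => exact hv
    | succ k ih =>
      intro q
      rw [husucc]
      exact Finset.sum_nonneg fun x _ => mul_nonneg (ih x) (hnn x q)
  have serial : ∀ q : Q, ∃ x, 0 < C q x := by
    intro q
    by_contra h
    push_neg at h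
    have : ∑ q', C q q' = 0 :=
      Finset.sum_eq_zero fun x _ => le_antisymm (h x) (hnn q x)
    rw [hrow q] at this
    norm_num at this
  -- the minimum positive entry
  set P : Finset (Q × Q) := Finset.univ.filter (fun p => 0 < C p.1 p.2) with hP
  have hPne : P.Nonempty := by
    obtain ⟨x, hx⟩ := serial q0
    exact ⟨(q0, x), by simp [hP, hx]⟩
  set δ : ℝ := P.inf' hPne (fun p => C p.1 p.2) with hδ
  have hδpos : 0 < δ := by
    rw [hδ, Finset.lt_inf'_iff]
    intro p hp
    simpa [hP] using (Finset.mem_filter.mp hp).2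
  have hδle : ∀ q q', 0 < C q q' → δ ≤ C q q' := by
    intro q q' h
    have hm : (q, q') ∈ P := Finset.mem_filter.mpr ⟨Finset.mem_univ _, h⟩
    exact Finset.inf'_le _ hm
  have hδ1 : δ ≤ 1 := by
    obtain ⟨x, hx⟩ := serial q0
    calc δ ≤ C q0 x := hδle _ _ hx
      _ ≤ ∑ q', C q0 q' := Finset.single_le_sum (fun i _ => hnn q0 i) (Finset.mem_univ x)
      _ = 1 := hrow q0
  -- recurrent states
  set Rec : Finset Q := Finset.univ.filter (fun q => ∀ x, 0 < C q x → 0 < C x q) with hRec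
  have hRecMem : ∀ q, q ∈ Rec ↔ ∀ x, 0 < C q x → 0 < C x q := by
    intro q; simp [hRec]
  have hRecClosed : ∀ q ∈ Rec, ∀ y, 0 < C q y → y ∈ Rec := by
    intro q hq y hqy
    rw [hRecMem] at hq ⊢
    intro z hyz
    have hyq : 0 < C y q := hq y hqy
    have hqz : 0 < C q z := htrans _ _ _ hqy hyz
    have hzq : 0 < C z q := hq z hqz
    exact htrans _ _ _ hzq hqy
  have hreach : ∀ q : Q, ∃ z ∈ Rec, 0 < C q z := by
    have key : ∀ n (x : Q),
        (Finset.univ.filter fun y => 0 < C x y ∧ ¬ 0 < C y x).card ≤ n →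
        x ∈ Rec ∨ ∃ z ∈ Rec, 0 < C x z := by
      intro n
      induction n with
      | zero =>
        intro x hx
        left
        rw [hRecMem]
        intro y hxy
        by_contra h
        have : y ∈ Finset.univ.filter fun y => 0 < C x y ∧ ¬ 0 < C y x :=
          Finset.mem_filter.mpr ⟨Finset.mem_univ _, hxy, h⟩
        rw [Finset.card_eq_zero.mp (Nat.le_zero.mp hx)] at this
        exact absurd this (Finset.notMem_empty y)
      | succ n ih =>
        intro x hx
        by_cases hxR : x ∈ Rec
        · exact Or.inl hxR
        right
        have hxy : ∃ y, 0 < C x y ∧ ¬ 0 < C y x := by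
          by_contra h
          push_neg at h
          exact hxR (by rw [hRecMem]; intro y hy; exact h y hy)
        obtain ⟨y, hxy, hnyx⟩ := hxy
        have hyx : y ∈ Finset.univ.filter fun z => 0 < C x z ∧ ¬ 0 < C z x :=
          Finset.mem_filter.mpr ⟨Finset.mem_univ _, hxy, hnyx⟩
        have hsub : (Finset.univ.filter fun z => 0 < C y z ∧ ¬ 0 < C z y) ⊆
            (Finset.univ.filter fun z => 0 < C x z ∧ ¬ 0 < C z x) := by
          intro z hz
          rw [Finset.mem_filter] at hz ⊢
          obtain ⟨-, hyz, hnzy⟩ := hz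
          refine ⟨Finset.mem_univ z, htrans _ _ _ hxy hyz, fun hzx => ?_⟩
          exact hnzy (htrans _ _ _ hzx hxy)
        have hyny : y ∉ (Finset.univ.filter fun z => 0 < C y z ∧ ¬ 0 < C z y) := by
          simp only [Finset.mem_filter]
          rintro ⟨-, h1, h2⟩
          exact h2 h1
        have hcard : (Finset.univ.filter fun z => 0 < C y z ∧ ¬ 0 < C z y).card <
            (Finset.univ.filter fun z => 0 < C x z ∧ ¬ 0 < C z x).card :=
          Finset.card_lt_card ((Finset.ssubset_iff_of_subset hsub).mpr ⟨y, hyx, hyny⟩)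
        rcases ih y (by omega) with hR | ⟨z, hz, hcz⟩
        · exact ⟨y, hR, hxy⟩
        · exact ⟨z, hz, htrans _ _ _ hxy hcz⟩
    intro q
    obtain ⟨x, hx⟩ := serial q
    rcases key _ x le_rfl with h | ⟨z, hz, hcz⟩
    · exact ⟨x, h, hx⟩
    · exact ⟨z, hz, htrans _ _ _ hx hcz⟩
  -- mass on transient states decays geometrically
  set t : ℕ → ℝ := fun k => ∑ x ∈ Recᶜ, u k x with ht
  have htnn : ∀ k, 0 ≤ t k := fun k => Finset.sum_nonneg fun x _ => hunn k x
  have hTstep : ∀ k, t (k + 1) ≤ (1 - δ) * t k := by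
    intro k
    have hswap : t (k + 1) = ∑ x, u k x * ∑ q ∈ Recᶜ, C x q := by
      rw [ht]
      simp only [husucc k, appC]
      rw [Finset.sum_comm]
      simp [Finset.mul_sum]
    rw [hswap, ← Finset.sum_add_sum_compl Rec]
    have h1 : ∑ x ∈ Rec, u k x * ∑ q ∈ Recᶜ, C x q = 0 := by
      apply Finset.sum_eq_zero
      intro x hx
      have hz : ∑ q ∈ Recᶜ, C x q = 0 := by
        apply Finset.sum_eq_zero
        intro q hq
        by_contra h
        exact (Finset.mem_compl.mp hq)
          (hRecClosed x hx q (lt_of_le_of_ne (hnn x q) (Ne.symm h)))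
      rw [hz, mul_zero]
    rw [h1, zero_add]
    calc ∑ x ∈ Recᶜ, u k x * ∑ q ∈ Recᶜ, C x q
        ≤ ∑ x ∈ Recᶜ, u k x * (1 - δ) := by
          apply Finset.sum_le_sum
          intro x hx
          apply mul_le_mul_of_nonneg_left _ (hunn k x)
          obtain ⟨z, hz, hcz⟩ := hreach x
          have hsplit : ∑ q ∈ Rec, C x q + ∑ q ∈ Recᶜ, C x q = 1 := by
            rw [Finset.sum_add_sum_compl]; exact hrow x
          have hδz : δ ≤ ∑ q ∈ Rec, C x q :=
            le_trans (hδle _ _ hcz) (Finset.single_le_sum (fun i _ => hnn x i) hz)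
          linarith
      _ = (1 - δ) * t k := by rw [← Finset.sum_mul, ht, mul_comm]
  have hTmono : ∀ k, t (k + 1) ≤ t k := by
    intro k
    calc t (k+1) ≤ (1 - δ) * t k := hTstep k
      _ ≤ 1 * t k := mul_le_mul_of_nonneg_right (by linarith) (htnn k)
      _ = t k := one_mul _
  have hTgeom : ∀ k, t k ≤ t 0 * (1 - δ) ^ k := by
    intro k
    induction k with
    | zero => simp
    | succ k ih =>
      calc t (k+1) ≤ (1 - δ) * t k := hTstep k
        _ ≤ (1 - δ) * (t 0 * (1 - δ) ^ k) :=
            mul_le_mul_of_nonneg_left ih (by linarith)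
        _ = t 0 * (1 - δ) ^ (k + 1) := by ring
  by_cases hq0R : q0 ∈ Rec
  swap
  · -- q0 transient : converges to 0
    refine ⟨0, ?_⟩
    have hle : ∀ k, u k q0 ≤ t 0 * (1 - δ) ^ k := by
      intro k
      calc u k q0 ≤ t k :=
          Finset.single_le_sum (fun i _ => hunn k i) (Finset.mem_compl.mpr hq0R)
        _ ≤ t 0 * (1 - δ) ^ k := hTgeom k
    have hgeo : Tendsto (fun k => t 0 * (1 - δ) ^ k) atTop (𝓝 0) := by
      rw [show (0:ℝ) = t 0 * 0 by ring]
      exact (tendsto_pow_atTop_nhds_zero_of_lt_one (by linarith) (by linarith)).const_mul _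
    exact squeeze_zero (fun k => hunn k q0) hle hgeo
  -- q0 recurrent: analysis of its recurrence class
  set S : Finset Q := Finset.univ.filter (fun x => 0 < C q0 x ∧ 0 < C x q0) with hS
  have hSmem : ∀ x, x ∈ S ↔ 0 < C q0 x ∧ 0 < C x q0 := by
    intro x; rw [hS, Finset.mem_filter]; simp
  have hq0q0 : 0 < C q0 q0 := by
    obtain ⟨x, hx⟩ := serial q0
    exact htrans _ _ _ hx ((hRecMem q0).mp hq0R x hx)
  have hq0S : q0 ∈ S := (hSmem q0).mpr ⟨hq0q0, hq0q0⟩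
  have hSRec : ∀ x ∈ S, x ∈ Rec := fun x hx => hRecClosed q0 hq0R x ((hSmem x).mp hx).1
  have hSpos : ∀ x ∈ S, ∀ y ∈ S, 0 < C x y := by
    intro x hx y hy
    exact htrans _ _ _ ((hSmem x).mp hx).2 ((hSmem y).mp hy).1
  have hIntoS : ∀ q ∈ Rec, ∀ x ∈ S, 0 < C q x → q ∈ S := by
    intro q hq x hx hqx
    have hxq : 0 < C x q := (hRecMem q).mp hq x hqx
    exact (hSmem q).mpr ⟨htrans _ _ _ ((hSmem x).mp hx).1 hxq,
      htrans _ _ _ hqx ((hSmem x).mp hx).2⟩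
  have hSclosed : ∀ x ∈ S, ∀ q, 0 < C x q → q ∈ S := by
    intro x hx q hxq
    have hqR : q ∈ Rec := hRecClosed x (hSRec x hx) q hxq
    exact hIntoS q hqR x hx ((hRecMem x).mp (hSRec x hx) q hxq)
  have hrowS : ∀ x ∈ S, ∑ y ∈ S, C x y = 1 := by
    intro x hx
    rw [← hrow x]
    apply Finset.sum_subset (Finset.subset_univ S)
    intro y _ hy
    by_contra h
    exact hy (hSclosed x hx y (lt_of_le_of_ne (hnn x y) (Ne.symm h)))
  set nS : ℕ := S.card with hnS
  have hnSpos : 0 < nS := Finset.card_pos.mpr ⟨q0, hq0S⟩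
  set γ : ℝ := (nS : ℝ) * δ with hγ
  have hγpos : 0 < γ := mul_pos (by exact_mod_cast hnSpos) hδpos
  have hsumδ : ∑ _y ∈ S, δ = γ := by rw [Finset.sum_const, nsmul_eq_mul, hγ, hnS]
  have hγ1 : γ ≤ 1 := by
    rw [← hsumδ, ← hrowS q0 hq0S]
    exact Finset.sum_le_sum fun y hy => hδle _ _ (hSpos q0 hq0S y hy)
  -- the contraction estimate on the class S
  have hcontr : ∀ e : Q → ℝ, (∑ x ∈ S, e x) = 0 →
      ∑ q ∈ S, |∑ x ∈ S, e x * C x q| ≤ (1 - γ) * ∑ x ∈ S, |e x| := by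
    intro e he
    have key : ∀ q ∈ S, |∑ x ∈ S, e x * C x q| ≤ ∑ x ∈ S, |e x| * (C x q - δ) := by
      intro q hq
      have h1 : ∑ x ∈ S, e x * C x q = ∑ x ∈ S, e x * (C x q - δ) := by
        simp only [mul_sub]
        rw [Finset.sum_sub_distrib, ← Finset.sum_mul, he, zero_mul, sub_zero]
      rw [h1]
      refine (Finset.abs_sum_le_sum_abs _ _).trans ?_
      apply Finset.sum_le_sum
      intro x hx
      rw [abs_mul,
        abs_of_nonneg (by linarith [hδle x q (hSpos x hx q hq)] : (0:ℝ) ≤ C x q - δ)]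
    calc ∑ q ∈ S, |∑ x ∈ S, e x * C x q| ≤ ∑ q ∈ S, ∑ x ∈ S, |e x| * (C x q - δ) :=
          Finset.sum_le_sum key
      _ = ∑ x ∈ S, |e x| * (1 - γ) := by
          rw [Finset.sum_comm]
          apply Finset.sum_congr rfl
          intro x hx
          rw [← Finset.mul_sum, Finset.sum_sub_distrib, hrowS x hx, hsumδ]
      _ = (1 - γ) * ∑ x ∈ S, |e x| := by rw [← Finset.sum_mul, mul_comm]
  -- evolution of the mass of S
  have hmassS : ∀ k, ∑ x ∈ S, u (k+1) x
      = ∑ x ∈ S, u k x + ∑ q ∈ Recᶜ, u k q * ∑ x ∈ S, C q x := by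
    intro k
    have hswap : ∑ x ∈ S, u (k+1) x = ∑ q, u k q * ∑ x ∈ S, C q x := by
      simp only [husucc k, appC]
      rw [Finset.sum_comm]
      simp [Finset.mul_sum]
    rw [hswap, ← Finset.sum_add_sum_compl Rec]
    congr 1
    have h1 : ∑ q ∈ S, u k q * ∑ x ∈ S, C q x = ∑ q ∈ Rec, u k q * ∑ x ∈ S, C q x := by
      apply Finset.sum_subset (fun x hx => hSRec x hx)
      intro q hqR hqS
      have hz : ∑ x ∈ S, C q x = 0 := by
        apply Finset.sum_eq_zero
        intro x hx
        by_contra h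
        exact hqS (hIntoS q hqR x hx (lt_of_le_of_ne (hnn q x) (Ne.symm h)))
      rw [hz, mul_zero]
    rw [← h1]
    apply Finset.sum_congr rfl
    intro q hq
    rw [hrowS q hq, mul_one]
  have hσbound : ∀ k, 0 ≤ (∑ x ∈ S, u (k+1) x) - ∑ x ∈ S, u k x ∧
      (∑ x ∈ S, u (k+1) x) - ∑ x ∈ S, u k x ≤ t k := by
    intro k
    rw [hmassS k]
    have hpos : 0 ≤ ∑ q ∈ Recᶜ, u k q * ∑ x ∈ S, C q x :=
      Finset.sum_nonneg fun q _ =>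
        mul_nonneg (hunn k q) (Finset.sum_nonneg fun x _ => hnn q x)
    constructor
    · linarith
    · have hle : ∑ q ∈ Recᶜ, u k q * ∑ x ∈ S, C q x ≤ t k := by
        rw [ht]
        apply Finset.sum_le_sum
        intro q _
        have hle1 : ∑ x ∈ S, C q x ≤ 1 := by
          rw [← hrow q]
          exact Finset.sum_le_sum_of_subset_of_nonneg (Finset.subset_univ S)
            (fun i _ _ => hnn q i)
        exact mul_le_of_le_one_right (hunn k q) hle1
      linarith
  -- consecutive differences
  set e : ℕ → Q → ℝ := fun m x => u (m+1) x - u m x with he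
  set Dv : ℕ → ℝ := fun m => ∑ q ∈ S, |e m q| with hDv
  have hDnn : ∀ m, 0 ≤ Dv m := fun m => Finset.sum_nonneg fun q _ => abs_nonneg _
  have hestep : ∀ m, ∀ q ∈ S,
      e (m+1) q = (∑ x ∈ S, e m x * C x q) + ∑ x ∈ Recᶜ, e m x * C x q := by
    intro m q hq
    have h0 : e (m+1) q = ∑ x, e m x * C x q := by
      simp only [he, husucc, appC]
      rw [← Finset.sum_sub_distrib]
      apply Finset.sum_congr rfl
      intro x _
      ring
    rw [h0, ← Finset.sum_add_sum_compl S (fun x => e m x * C x q)]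
    congr 1
    symm
    apply Finset.sum_subset
    · intro x hx
      rw [Finset.mem_compl] at hx ⊢
      exact fun hxS => hx (hSRec x hxS)
    · intro x hxSc hxRc
      have hxR : x ∈ Rec := by
        by_contra h
        exact hxRc (Finset.mem_compl.mpr h)
      have hz : C x q = 0 := by
        by_contra h
        exact (Finset.mem_compl.mp hxSc)
          (hIntoS x hxR q hq (lt_of_le_of_ne (hnn x q) (Ne.symm h)))
      rw [hz, mul_zero]
  -- the key recurrence for Dv
  have hDstep : ∀ m, Dv (m+1) ≤ (1 - γ) * Dv m + 4 * t m := by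
    intro m
    have hσe : ∑ x ∈ S, e m x = (∑ x ∈ S, u (m+1) x) - ∑ x ∈ S, u m x := by
      simp only [he]
      rw [Finset.sum_sub_distrib]
    obtain ⟨hσ0, hσt⟩ := hσbound m
    rw [← hσe] at hσ0 hσt
    set σ : ℝ := ∑ x ∈ S, e m x with hσdef
    set c : ℝ := σ / (nS : ℝ) with hc
    have hnSne : (nS : ℝ) ≠ 0 := by
      exact_mod_cast Nat.pos_iff_ne_zero.mp hnSpos
    have hcnn : 0 ≤ c := div_nonneg hσ0 (Nat.cast_nonneg nS)
    have hnc : (nS : ℝ) * c = σ := by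
      rw [hc]; field_simp
    set eh : Q → ℝ := fun x => e m x - c with heh
    have hehsum : ∑ x ∈ S, eh x = 0 := by
      simp only [heh]
      rw [Finset.sum_sub_distrib, Finset.sum_const, nsmul_eq_mul, ← hσdef, ← hnS, hnc,
        sub_self]
    have hehabs : ∑ x ∈ S, |eh x| ≤ Dv m + σ := by
      calc ∑ x ∈ S, |eh x| ≤ ∑ x ∈ S, (|e m x| + |c|) := by
            apply Finset.sum_le_sum
            intro x _
            simp only [heh]
            exact abs_sub _ _
        _ = Dv m + (nS : ℝ) * |c| := by
            rw [Finset.sum_add_distrib, Finset.sum_const, nsmul_eq_mul, ← hnS, hDv]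
        _ = Dv m + σ := by rw [abs_of_nonneg hcnn, hnc]
    have hsplit : ∀ q ∈ S, e (m+1) q
        = (∑ x ∈ S, eh x * C x q) + c * (∑ x ∈ S, C x q) + ∑ x ∈ Recᶜ, e m x * C x q := by
      intro q hq
      rw [hestep m q hq]
      have h2 : ∑ x ∈ S, e m x * C x q = (∑ x ∈ S, eh x * C x q) + c * ∑ x ∈ S, C x q := by
        calc ∑ x ∈ S, e m x * C x q = ∑ x ∈ S, (eh x * C x q + c * C x q) := by
              apply Finset.sum_congr rfl
              intro x _
              have : e m x = eh x + c := by simp [heh]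
              rw [this]; ring
          _ = (∑ x ∈ S, eh x * C x q) + c * ∑ x ∈ S, C x q := by
              rw [Finset.sum_add_distrib, Finset.mul_sum]
      rw [h2]
    -- bound the three pieces
    have hA : ∑ q ∈ S, |∑ x ∈ S, eh x * C x q| ≤ (1 - γ) * (Dv m + σ) := by
      refine (hcontr eh hehsum).trans ?_
      exact mul_le_mul_of_nonneg_left hehabs (by linarith)
    have hB : ∑ q ∈ S, |c * ∑ x ∈ S, C x q| = σ := by
      calc ∑ q ∈ S, |c * ∑ x ∈ S, C x q| = ∑ q ∈ S, c * ∑ x ∈ S, C x q := by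
            apply Finset.sum_congr rfl
            intro q _
            exact abs_of_nonneg (mul_nonneg hcnn (Finset.sum_nonneg fun x _ => hnn x q))
        _ = c * ∑ q ∈ S, ∑ x ∈ S, C x q := by rw [Finset.mul_sum]
        _ = c * ∑ x ∈ S, ∑ q ∈ S, C x q := by rw [Finset.sum_comm]
        _ = c * nS := by
            congr 1
            calc ∑ x ∈ S, ∑ q ∈ S, C x q = ∑ x ∈ S, (1:ℝ) :=
                  Finset.sum_congr rfl fun x hx => hrowS x hx
              _ = (nS : ℝ) := by rw [Finset.sum_const, nsmul_eq_mul, mul_one, hnS]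
        _ = σ := by rw [mul_comm, hnc]
    have hR : ∑ q ∈ S, |∑ x ∈ Recᶜ, e m x * C x q| ≤ t (m+1) + t m := by
      calc ∑ q ∈ S, |∑ x ∈ Recᶜ, e m x * C x q|
          ≤ ∑ q ∈ S, ∑ x ∈ Recᶜ, |e m x| * C x q := by
            apply Finset.sum_le_sum
            intro q _
            refine (Finset.abs_sum_le_sum_abs _ _).trans ?_
            apply Finset.sum_le_sum
            intro x _
            rw [abs_mul, abs_of_nonneg (hnn x q)]
        _ = ∑ x ∈ Recᶜ, |e m x| * ∑ q ∈ S, C x q := by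
            rw [Finset.sum_comm]
            exact Finset.sum_congr rfl fun x _ => by rw [Finset.mul_sum]
        _ ≤ ∑ x ∈ Recᶜ, |e m x| := by
            apply Finset.sum_le_sum
            intro x _
            have hle1 : ∑ q ∈ S, C x q ≤ 1 := by
              rw [← hrow x]
              exact Finset.sum_le_sum_of_subset_of_nonneg (Finset.subset_univ S)
                (fun i _ _ => hnn x i)
            exact mul_le_of_le_one_right (abs_nonneg _) hle1
        _ ≤ ∑ x ∈ Recᶜ, (u (m+1) x + u m x) := by
            apply Finset.sum_le_sum
            intro x _
            simp only [he]
            exact (abs_sub _ _).trans (by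
              rw [abs_of_nonneg (hunn (m+1) x), abs_of_nonneg (hunn m x)])
        _ = t (m+1) + t m := by rw [Finset.sum_add_distrib]
    have hmain : Dv (m+1) ≤ ((1 - γ) * (Dv m + σ)) + σ + (t (m+1) + t m) := by
      calc Dv (m+1) = ∑ q ∈ S, |e (m+1) q| := rfl
        _ ≤ ∑ q ∈ S, (|∑ x ∈ S, eh x * C x q| + |c * ∑ x ∈ S, C x q|
              + |∑ x ∈ Recᶜ, e m x * C x q|) := by
            apply Finset.sum_le_sum
            intro q hq
            rw [hsplit q hq]
            exact (abs_add_le _ _).trans (add_le_add_left (abs_add_le _ _) _)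
        _ = (∑ q ∈ S, |∑ x ∈ S, eh x * C x q|) + (∑ q ∈ S, |c * ∑ x ∈ S, C x q|)
              + ∑ q ∈ S, |∑ x ∈ Recᶜ, e m x * C x q| := by
            rw [Finset.sum_add_distrib, Finset.sum_add_distrib]
        _ ≤ ((1 - γ) * (Dv m + σ)) + σ + (t (m+1) + t m) := by
            rw [hB]
            exact add_le_add (add_le_add_left hA _) hR
    have hgs : (1 - γ) * σ ≤ σ := by nlinarith
    have htm : t (m+1) ≤ t m := hTmono m
    have hexp : (1 - γ) * (Dv m + σ) = (1 - γ) * Dv m + (1 - γ) * σ := by ring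
    linarith [htnn m]
  -- geometric domination of Dv
  set r : ℝ := max (1 - γ) (max (1 - δ) (1/2)) with hr
  have hrhalf : (1/2 : ℝ) ≤ r := le_trans (le_max_right _ _) (le_max_right _ _)
  have hr0 : (0:ℝ) ≤ r := by linarith
  have hr1 : r < 1 := by
    rw [hr]
    apply max_lt (by linarith)
    apply max_lt (by linarith)
    norm_num
  have hrδ : 1 - δ ≤ r := le_trans (le_max_left _ _) (le_max_right _ _)
  have hrγ : 1 - γ ≤ r := le_max_left _ _
  have hDgeom : ∀ m, Dv m ≤ (Dv 0 + 8 * t 0 * m) * r ^ m := by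
    intro m
    induction m with
    | zero => simp
    | succ m ih =>
      have hpow : (1 - δ) ^ m ≤ r ^ m := pow_le_pow_left₀ (by linarith) hrδ m
      have ht0 : 0 ≤ t 0 := htnn 0
      have hpownn : (0:ℝ) ≤ r ^ m := pow_nonneg hr0 m
      have h4 : 4 * (t 0 * r ^ m) ≤ 8 * t 0 * (r * r ^ m) := by
        nlinarith [mul_nonneg (mul_nonneg ht0 hpownn) (show (0:ℝ) ≤ 2*r - 1 by linarith)]
      calc Dv (m+1) ≤ (1 - γ) * Dv m + 4 * t m := hDstep m
        _ ≤ r * Dv m + 4 * (t 0 * r ^ m) := by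
            have h1 : (1 - γ) * Dv m ≤ r * Dv m :=
              mul_le_mul_of_nonneg_right hrγ (hDnn m)
            have h2 : t m ≤ t 0 * r ^ m :=
              (hTgeom m).trans (mul_le_mul_of_nonneg_left hpow ht0)
            linarith
        _ ≤ r * ((Dv 0 + 8 * t 0 * m) * r ^ m) + 4 * (t 0 * r ^ m) := by
            have := mul_le_mul_of_nonneg_left ih hr0
            linarith
        _ ≤ (Dv 0 + 8 * t 0 * (↑(m+1) : ℝ)) * r ^ (m+1) := by
            have hrr : r ^ (m+1) = r * r ^ m := by rw [pow_succ]; ring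
            have hexp : (Dv 0 + 8 * t 0 * ((m:ℝ) + 1)) * (r * r ^ m)
                = r * ((Dv 0 + 8 * t 0 * m) * r ^ m) + 8 * t 0 * (r * r ^ m) := by
              ring
            push_cast
            rw [hrr, hexp]
            linarith
  -- summability, Cauchy, limit
  have hs1 : Summable (fun m : ℕ => Dv 0 * r ^ m) :=
    (summable_geometric_of_lt_one hr0 hr1).mul_left _
  have hs2 : Summable (fun m : ℕ => (m:ℝ) * r ^ m) := by
    have h := summable_pow_mul_geometric_of_norm_lt_one 1
      (r := r) (by rwa [Real.norm_eq_abs, abs_of_nonneg hr0])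
    simpa using h
  have hsum : Summable (fun m : ℕ => (Dv 0 + 8 * t 0 * m) * r ^ m) := by
    have heq : (fun m : ℕ => (Dv 0 + 8 * t 0 * m) * r ^ m)
        = fun m : ℕ => Dv 0 * r ^ m + (8 * t 0) * ((m:ℝ) * r ^ m) := by
      funext m; ring
    rw [heq]
    exact hs1.add (hs2.mul_left _)
  have hcauchy : CauchySeq (fun k => u k q0) := by
    apply cauchySeq_of_dist_le_of_summable _ _ hsum
    intro n
    rw [Real.dist_eq]
    have h1 : |u n q0 - u (n+1) q0| = |e n q0| := by
      simp only [he]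
      rw [abs_sub_comm]
    rw [h1]
    calc |e n q0| ≤ Dv n := by
          simp only [hDv]
          exact Finset.single_le_sum (f := fun q => |e n q|)
            (fun i _ => abs_nonneg _) hq0S
      _ ≤ _ := hDgeom n
  obtain ⟨L, hL⟩ := cauchySeq_tendsto_of_complete hcauchy
  exact ⟨L, hL⟩

theorem wordPrefix_length (w : ℕ → A) (n : ℕ) : (wordPrefix w n).length = n := by
  simp [wordPrefix]

theorem wordPrefix_getElem (w : ℕ → A) (n i : ℕ) (h : i < (wordPrefix w n).length) :
    (wordPrefix w n)[i] = w i := by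
  simp [wordPrefix]

theorem wordPrefix_add (w : ℕ → A) (a b : ℕ) :
    wordPrefix w (a + b) = wordPrefix w a ++ (List.range b).map (fun i => w (a + i)) := by
  unfold wordPrefix
  rw [List.range_add, List.map_append, List.map_map]
  rfl

theorem periodicWord_add_mul (ρ : List A) (h : ρ ≠ []) (k n : ℕ) :
    periodicWord ρ h (k * ρ.length + n) = periodicWord ρ h n := by
  show ρ.get _ = ρ.get _
  apply congrArg ρ.get
  apply Fin.ext
  show (k * ρ.length + n) % ρ.length = n % ρ.length
  rw [mul_comm, Nat.mul_add_mod]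

theorem wordPrefix_periodic (ρ : List A) (h : ρ ≠ []) (k m : ℕ) :
    wordPrefix (periodicWord ρ h) (k * ρ.length + m)
      = wordPrefix (periodicWord ρ h) (k * ρ.length) ++ wordPrefix (periodicWord ρ h) m := by
  rw [wordPrefix_add]
  congr 1
  apply List.map_congr_left
  intro i _
  exact periodicWord_add_mul ρ h k i

theorem wordPrefix_period_len (ρ : List A) (h : ρ ≠ []) :
    wordPrefix (periodicWord ρ h) ρ.length = ρ := by
  apply List.ext_getElem
  · simp [wordPrefix]
  intro i h1 h2
  rw [wordPrefix_getElem]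
  show ρ.get _ = _
  have hmod : i % ρ.length = i := Nat.mod_eq_of_lt h2
  simp [hmod]

theorem sum_mul_pos_iff {f g : Q → ℝ} (hf : ∀ x, 0 ≤ f x) (hg : ∀ x, 0 ≤ g x) :
    0 < ∑ x, f x * g x ↔ ∃ x, 0 < f x ∧ 0 < g x := by
  constructor
  · intro hpos
    by_contra hc
    push_neg at hc
    have hz : ∑ x, f x * g x = 0 := by
      apply Finset.sum_eq_zero
      intro x _
      by_cases hfx : 0 < f x
      · rw [le_antisymm (hc x hfx) (hg x), mul_zero]
      · rw [le_antisymm (not_lt.mp hfx) (hf x), zero_mul]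
    rw [hz] at hpos
    exact lt_irrefl 0 hpos
  · rintro ⟨x, hfx, hgx⟩
    exact Finset.sum_pos' (fun i _ => mul_nonneg (hf i) (hg i))
      ⟨x, Finset.mem_univ x, mul_pos hfx hgx⟩

theorem exists_stable_power (T : FPT Q A) (ρ : List A) (h : ρ ≠ []) :
    ∃ d : ℕ, 1 ≤ d ∧ ∀ q q' : Q,
      (0 < Mword T (wordPrefix (periodicWord ρ h) (2 * d * ρ.length)) q q' ↔
       0 < Mword T (wordPrefix (periodicWord ρ h) (d * ρ.length)) q q') := by
  classical
  set L := ρ.length with hL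
  set f : ℕ → Finset (Q × Q) := fun k =>
    Finset.univ.filter (fun p =>
      0 < Mword T (wordPrefix (periodicWord ρ h) (k * L)) p.1 p.2) with hf
  have hstep : ∀ k, f (k + 1) =
      Finset.univ.filter (fun p => ∃ x, (p.1, x) ∈ f k ∧ 0 < Mword T ρ x p.2) := by
    intro k
    have hsplit : wordPrefix (periodicWord ρ h) ((k+1) * L)
        = wordPrefix (periodicWord ρ h) (k * L) ++ ρ := by
      have harith : (k+1) * L = k * L + L := by ring
      rw [harith, wordPrefix_periodic ρ h k L, wordPrefix_period_len]
    ext p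
    simp only [hf, Finset.mem_filter, Finset.mem_univ, true_and, hsplit, Mword_append]
    rw [sum_mul_pos_iff (fun x => Mword_nonneg T _ p.1 x) (fun x => Mword_nonneg T ρ x p.2)]
  -- pigeonhole
  obtain ⟨a, b, hab, hfab⟩ := Finite.exists_ne_map_eq_of_infinite f
  wlog hlt : a < b generalizing a b
  · exact this b a hab.symm hfab.symm (by omega)
  set p := b - a with hp
  have hppos : 0 < p := by omega
  have hshift : ∀ j, f (a + j) = f (b + j) := by
    intro j
    induction j with
    | zero => simpa using hfab
    | succ j ih =>
      have e1 : a + (j + 1) = (a + j) + 1 := by ring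
      have e2 : b + (j + 1) = (b + j) + 1 := by ring
      rw [e1, e2, hstep, hstep, ih]
  have hper : ∀ m, f (a + m + p) = f (a + m) := by
    intro m
    have : a + m + p = b + m := by omega
    rw [this, ← hshift m]
  have hper' : ∀ m t, f (a + m + t * p) = f (a + m) := by
    intro m t
    induction t with
    | zero => simp
    | succ t ih =>
      have : a + m + (t + 1) * p = a + (m + t * p) + p := by ring
      rw [this, hper (m + t * p)]
      have : a + (m + t * p) = a + m + t * p := by ring
      rw [this, ih]
  refine ⟨(a + 1) * p, ?_, ?_⟩
  · have h := Nat.mul_pos (show 0 < a + 1 by omega) hppos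
    omega
  have hda : a ≤ (a + 1) * p := by
    calc a ≤ a + 1 := by omega
      _ = (a+1) * 1 := by ring
      _ ≤ (a+1) * p := Nat.mul_le_mul_left _ hppos
  have hfd : f (2 * ((a+1) * p)) = f ((a+1) * p) := by
    have e1 : 2 * ((a+1)*p) = a + ((a+1)*p - a) + (a+1) * p := by omega
    have e2 : (a+1)*p = a + ((a+1)*p - a) := by omega
    rw [e1, hper' _ (a+1), ← e2]
  intro q q'
  have harith : 2 * ((a+1)*p) * L = 2 * ((a+1) * p) * L := rfl
  constructor
  · intro hpos
    have hm : (q, q') ∈ f (2 * ((a+1) * p)) := by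
      rw [hf]
      exact Finset.mem_filter.mpr ⟨Finset.mem_univ _, hpos⟩
    rw [hfd] at hm
    exact (Finset.mem_filter.mp hm).2
  · intro hpos
    have hm : (q, q') ∈ f ((a+1) * p) :=
      Finset.mem_filter.mpr ⟨Finset.mem_univ _, hpos⟩
    rw [← hfd] at hm
    exact (Finset.mem_filter.mp hm).2
end Aux

set_option maxHeartbeats 1000000 in
theorem stmt9 {Q A : Type*} [Fintype Q] [DecidableEq Q]
    (T : FPT Q A) (β : Q → ℝ) (hβ : IsDist β)
    (w : ℕ → A) (hw : IsLasso w) :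
    SimpleProcess (fun n => delta T β (wordPrefix w n)) := by
  classical
  obtain ⟨ρ₁, ρ₂, hρ₂ne, h1, h2⟩ := hw
  set μ : ℕ → Q → ℝ := fun n => delta T β (wordPrefix w n) with hμ
  have hμnn : ∀ n q, 0 ≤ μ n q := fun n q => delta_nonneg T hβ.1 _ q
  set L₁ := ρ₁.length with hL₁
  set L₂ := ρ₂.length with hL₂
  have hL₂pos : 0 < L₂ := List.length_pos_iff.mpr hρ₂ne
  set pw : ℕ → A := periodicWord ρ₂ hρ₂ne with hpw
  have hw1 : wordPrefix w L₁ = ρ₁ := by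
    apply List.ext_getElem
    · simp [wordPrefix]; exact hL₁
    intro i hi1 hi2
    rw [wordPrefix_getElem]
    have := h1 i hi2
    rw [List.getElem?_eq_getElem hi2] at this
    exact (Option.some.inj this).symm
  have hw2 : ∀ i, w (L₁ + i) = pw i := by
    intro i
    have hle : L₁ ≤ L₁ + i := Nat.le_add_right _ _
    have := h2 (L₁ + i) hle
    have he : L₁ + i - L₁ = i := by omega
    rw [he] at this
    have hlt : i % L₂ < ρ₂.length := Nat.mod_lt _ hL₂pos
    rw [List.getElem?_eq_getElem hlt] at this
    have : ρ₂[i % L₂] = w (L₁ + i) := Option.some.inj this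
    rw [← this]
    rfl
  have hkey : ∀ m, wordPrefix w (L₁ + m) = ρ₁ ++ wordPrefix pw m := by
    intro m
    rw [wordPrefix_add, hw1]
    congr 1
    apply List.map_congr_left
    intro i _
    exact hw2 i
  -- the stable power
  obtain ⟨d, hd1, hiff⟩ := exists_stable_power T ρ₂ hρ₂ne
  set W : List A := wordPrefix pw (d * L₂) with hW
  set C : Q → Q → ℝ := fun x y => Mword T W x y with hC
  have hCnn : ∀ q q', 0 ≤ C q q' := fun q q' => Mword_nonneg T W q q'
  have hCrow : ∀ q, ∑ q', C q q' = 1 := fun q => Mword_row T W q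
  have hCtrans : ∀ q x q', 0 < C q x → 0 < C x q' → 0 < C q q' := by
    intro q x q' hqx hxq'
    have hWW : wordPrefix pw (2 * d * L₂) = W ++ W := by
      have harith : 2 * d * L₂ = d * L₂ + d * L₂ := by ring
      rw [harith, hW, hpw]
      exact wordPrefix_periodic ρ₂ hρ₂ne d (d * L₂)
    apply (hiff q q').mp
    show 0 < Mword T (wordPrefix pw (2 * d * L₂)) q q'
    rw [hWW, Mword_append]
    rw [sum_mul_pos_iff (fun y => Mword_nonneg T W q y) (fun y => Mword_nonneg T W y q')]
    exact ⟨x, hqx, hxq'⟩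
  set v : Q → ℝ := delta T β ρ₁ with hv
  have hvnn : ∀ q, 0 ≤ v q := fun q => delta_nonneg T hβ.1 _ q
  set D : ℕ := d * L₂ with hD
  have hDpos : 0 < D := by positivity
  have hiter : ∀ k, delta T v (wordPrefix pw (k * D)) = (appC C)^[k] v := by
    intro k
    induction k with
    | zero =>
      simp only [Nat.zero_mul, Function.iterate_zero, id]
      rw [show wordPrefix pw 0 = [] by simp [wordPrefix]]
      exact delta_nil T v
    | succ k ih =>
      have harith : (k + 1) * D = (k * d) * L₂ + D := by rw [hD]; ring
      have harith2 : (k * d) * L₂ = k * D := by rw [hD]; ring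
      rw [harith, hpw, wordPrefix_periodic ρ₂ hρ₂ne (k * d) D, harith2]
      rw [delta_append, ← hpw, ih]
      rw [Function.iterate_succ_apply']
      rfl
  -- convergence along every residue class mod D
  have hres : ∀ r : ℕ, ∃ ℓ : Q → ℝ, ∀ q,
      Tendsto (fun k => μ (k * D + r) q) atTop (𝓝 (ℓ q)) := by
    have hbig : ∀ r : ℕ, L₁ ≤ r → ∃ ℓ : Q → ℝ, ∀ q,
        Tendsto (fun k => μ (k * D + r) q) atTop (𝓝 (ℓ q)) := by
      intro r hr
      set s := r - L₁ with hs
      have hform : ∀ k, μ (k * D + r) = delta T ((appC C)^[k] v) (wordPrefix pw s) := by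
        intro k
        have harith : k * D + r = L₁ + ((k * d) * L₂ + s) := by
          rw [hD, ← mul_assoc]; omega
        rw [hμ]
        simp only
        rw [harith, hkey, hpw, wordPrefix_periodic ρ₂ hρ₂ne (k * d) s]
        rw [delta_append, delta_append, ← hpw, ← hv]
        have harith2 : (k * d) * L₂ = k * D := by rw [hD]; ring
        rw [harith2, hiter k]
      have hconv : ∀ q0, ∃ L, Tendsto (fun k => (appC C)^[k] v q0) atTop (𝓝 L) :=
        key_conv C hCnn hCrow hCtrans v hvnn
      choose ℓ0 hℓ0 using hconv
      refine ⟨delta T ℓ0 (wordPrefix pw s), fun q => ?_⟩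
      have : Tendsto (fun k => delta T ((appC C)^[k] v) (wordPrefix pw s) q) atTop
          (𝓝 (delta T ℓ0 (wordPrefix pw s) q)) := by
        unfold delta
        apply tendsto_finset_sum
        intro x _
        exact (hℓ0 x).mul_const _
      apply this.congr
      intro k
      rw [hform k]
    intro r
    obtain ⟨ℓ, hℓ⟩ := hbig (L₁ * D + r) (by nlinarith [hDpos])
    refine ⟨ℓ, fun q => ?_⟩
    rw [← tendsto_add_atTop_iff_nat L₁]
    apply (hℓ q).congr
    intro k
    have harith : k * D + (L₁ * D + r) = (k + L₁) * D + r := by ring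
    rw [harith]
  choose ℓ hℓ using hres
  -- the threshold lam
  set V : Finset (ℕ × Q) := (Finset.range D ×ˢ Finset.univ).filter (fun p => 0 < ℓ p.1 p.2)
    with hV
  set lam : ℝ := if hne : V.Nonempty then V.inf' hne (fun p => ℓ p.1 p.2) / 2 else 1
    with hlam
  have hlampos : 0 < lam := by
    rw [hlam]
    split_ifs with hne
    · have : 0 < V.inf' hne (fun p => ℓ p.1 p.2) := by
        rw [Finset.lt_inf'_iff]
        intro p hp
        exact (Finset.mem_filter.mp hp).2
      linarith
    · norm_num
  have hlamlt : ∀ r, r < D → ∀ q, 0 < ℓ r q → lam < ℓ r q := by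
    intro r hr q hpos
    have hmem : (r, q) ∈ V := by
      rw [hV]
      exact Finset.mem_filter.mpr
        ⟨Finset.mem_product.mpr ⟨Finset.mem_range.mpr hr, Finset.mem_univ q⟩, hpos⟩
    have hne : V.Nonempty := ⟨(r, q), hmem⟩
    have hinfpos : 0 < V.inf' hne (fun p => ℓ p.1 p.2) := by
      rw [Finset.lt_inf'_iff]
      intro p hp
      exact (Finset.mem_filter.mp hp).2
    have hinle : V.inf' hne (fun p => ℓ p.1 p.2) ≤ ℓ r q := Finset.inf'_le _ hmem
    rw [hlam, dif_pos hne]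
    linarith
  refine ⟨lam, hlampos, fun n => Finset.univ.filter (fun q => lam < μ n q), ?_, ?_⟩
  · intro n q hq
    exact (Finset.mem_filter.mp hq).2
  -- main convergence of the small mass
  have hres0 : ∀ r, r < D →
      Tendsto (fun k => ∑ q, if lam < μ (k * D + r) q then 0 else μ (k * D + r) q)
        atTop (𝓝 0) := by
    intro r hr
    have hone : ∀ q : Q, Tendsto
        (fun k => if lam < μ (k * D + r) q then (0:ℝ) else μ (k * D + r) q)
        atTop (𝓝 0) := by
      intro q
      by_cases hpos : 0 < ℓ r q
      · have hev : ∀ᶠ k in atTop, lam < μ (k * D + r) q :=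
          (hℓ r q).eventually (eventually_gt_nhds (hlamlt r hr q hpos))
        have heq : (fun _ : ℕ => (0:ℝ)) =ᶠ[atTop]
            fun k => if lam < μ (k * D + r) q then (0:ℝ) else μ (k * D + r) q := by
          filter_upwards [hev] with k hk
          rw [if_pos hk]
        exact Tendsto.congr' heq tendsto_const_nhds
      · have hz : ℓ r q = 0 :=
          le_antisymm (not_lt.mp hpos) (le_of_tendsto_of_tendsto' tendsto_const_nhds
            (hℓ r q) (fun k => hμnn _ q))
        apply squeeze_zero (g := fun k => μ (k * D + r) q)
        · intro k
          split_ifs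
          · exact le_refl 0
          · exact hμnn _ q
        · intro k
          split_ifs
          · exact hμnn _ q
          · exact le_refl _
        · rw [← hz]
          exact hℓ r q
    have := tendsto_finset_sum (Finset.univ : Finset Q) (fun q _ => hone q)
    simpa using this
  have hgoal : Tendsto (fun n => ∑ q, if lam < μ n q then 0 else μ n q) atTop (𝓝 0) := by
    rw [Metric.tendsto_atTop]
    intro ε hε
    have hN : ∀ r, r < D → ∃ N, ∀ k ≥ N,
        dist (∑ q, if lam < μ (k * D + r) q then 0 else μ (k * D + r) q) 0 < ε :=
      fun r hr => Metric.tendsto_atTop.mp (hres0 r hr) ε hε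
    choose N hN using hN
    set Nfun : ℕ → ℕ := fun r => if hr : r < D then N r hr else 0 with hNfun
    set M : ℕ := (Finset.range D).sup Nfun with hM
    refine ⟨D * M, fun n hn => ?_⟩
    have hrlt : n % D < D := Nat.mod_lt _ hDpos
    have hkM : M ≤ n / D := by
      rw [Nat.le_div_iff_mul_le hDpos]
      calc M * D = D * M := by ring
        _ ≤ n := hn
    have hNle : N (n % D) hrlt ≤ M := by
      have h := Finset.le_sup (f := Nfun) (Finset.mem_range.mpr hrlt)
      have h2 : Nfun (n % D) = N (n % D) hrlt := by
        simp only [hNfun]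
        rw [dif_pos hrlt]
      rw [h2] at h
      exact h
    have heq : (n / D) * D + n % D = n := by
      rw [mul_comm]
      exact Nat.div_add_mod n D
    have := hN (n % D) hrlt (n / D) (le_trans hNle hkM)
    rwa [heq] at this
  apply hgoal.congr
  intro n
  have hcompl : (Finset.univ.filter (fun q => lam < μ n q))ᶜ
      = Finset.univ.filter (fun q => ¬ lam < μ n q) := by
    ext q
    simp
  rw [hcompl, Finset.sum_filter]
  apply Finset.sum_congr rfl
  intro q _
  by_cases hq : lam < μ n q
  · rw [if_pos hq, if_neg (not_not.mpr hq)]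
  · rw [if_neg hq, if_pos hq]

end PAut
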